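/- For every n ≥ 1 one has S₂(2^n − n) = 2^n, and for every k ∈ ℕ one has S₂(k) = 2^n if and only if 2^n − n ≤ k ≤ 2^n − 1. -/

import Mathlib

open Finset Nat

lemma sum_two_pow (n : ℕ) : ∑ i ∈ range n, 2 ^ i = 2 ^ n - 1 := by
  have := Nat.geomSum_eq (le_refl 2) n
  simpa using this

lemma sumA (n : ℕ) : ∑ i ∈ Finset.Ico 1 (n+1), 2 ^ n / 2 ^ i = 2 ^ n - 1 := by
  rw [Finset.sum_Ico_eq_sum_range]
  simp only [add_tsub_cancel_right]
  have h : ∀ i ∈ range n, 2 ^ n / 2 ^ (1 + i) = 2 ^ (n - 1 - i) := by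
    intro i hi
    rw [Nat.pow_div (by simp at hi; omega) (by norm_num)]
    congr 1; simp at hi; omega
  rw [Finset.sum_congr rfl h, Finset.sum_range_reflect (fun i => 2 ^ i) n, sum_two_pow]

lemma sumB (n : ℕ) : ∑ i ∈ Finset.Ico 1 (n+1), (2 ^ n - 1) / 2 ^ i = 2 ^ n - 1 - n := by
  rw [Finset.sum_Ico_eq_sum_range]
  simp only [add_tsub_cancel_right]
  have h : ∀ i ∈ range n, (2 ^ n - 1) / 2 ^ (1 + i) = 2 ^ (n - 1 - i) - 1 := by
    intro i hi
    simp only [mem_range] at hi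
    have hle : 1 + i ≤ n := by omega
    have hpow : 2 ^ n = 2 ^ (1 + i) * 2 ^ (n - 1 - i) := by
      rw [← pow_add]; congr 1; omega
    have hp1 : 0 < 2 ^ (1 + i) := Nat.pow_pos (by norm_num)
    have hp2 : 0 < 2 ^ (n - 1 - i) := Nat.pow_pos (by norm_num)
    rw [hpow]
    rw [Nat.div_eq_of_lt_le]
    · calc (2 ^ (n-1-i) - 1) * 2 ^ (1+i) = 2 ^ (1+i) * 2 ^ (n-1-i) - 2^(1+i) := by
            rw [Nat.sub_mul]; ring_nf
      _ ≤ 2 ^ (1+i) * 2 ^ (n-1-i) - 1 := by omega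
    · calc 2 ^ (1+i) * 2 ^ (n-1-i) - 1 < 2 ^ (1+i) * 2 ^ (n-1-i) := by
            have : 0 < 2 ^ (1+i) * 2 ^ (n-1-i) := Nat.mul_pos hp1 hp2
            omega
      _ ≤ (2 ^ (n-1-i) - 1 + 1) * 2 ^ (1+i) := by
            rw [Nat.sub_add_cancel hp2]; ring_nf; omega
  rw [Finset.sum_congr rfl h]
  rw [Finset.sum_tsub_distrib (range n) (f := fun x => 2 ^ (n - 1 - x)) (g := fun _ => 1) (by intro i _; exact Nat.one_le_two_pow)]
  rw [Finset.sum_range_reflect (fun i => 2 ^ i) n, sum_two_pow]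
  simp

lemma dvdA {n k : ℕ} : 2 ^ k ∣ (2 ^ n)! ↔ k ≤ 2 ^ n - 1 := by
  rw [Nat.Prime.pow_dvd_factorial_iff Nat.prime_two
    (b := n + 1) (by rw [Nat.log_pow (by norm_num)]; omega), sumA]

lemma dvdB {n k : ℕ} : 2 ^ k ∣ (2 ^ n - 1)! ↔ k ≤ 2 ^ n - 1 - n := by
  rw [Nat.Prime.pow_dvd_factorial_iff Nat.prime_two
    (b := n + 1) ?_, sumB]
  calc Nat.log 2 (2 ^ n - 1) ≤ Nat.log 2 (2 ^ n) :=
        Nat.log_mono_right (Nat.sub_le _ _)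
    _ = n := Nat.log_pow (by norm_num) n
    _ < n + 1 := by omega

/-- The Smarandache primitive number `S₂(k)`: the least `n` such that `2^k` divides `n!`. -/
noncomputable def S2 (k : ℕ) : ℕ := sInf {n : ℕ | 2 ^ k ∣ Nat.factorial n}

theorem stmt_12 : ∀ n : ℕ, 1 ≤ n →
    S2 (2 ^ n - n) = 2 ^ n ∧
    ∀ k : ℕ, (S2 k = 2 ^ n ↔ 2 ^ n - n ≤ k ∧ k ≤ 2 ^ n - 1) := by
  intro n hn
  have hn2 : n + 1 ≤ 2 ^ n := by
    have := Nat.lt_two_pow_self (n := n); omega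
  have key : ∀ k : ℕ, S2 k = 2 ^ n ↔ 2 ^ n - n ≤ k ∧ k ≤ 2 ^ n - 1 := by
    intro k
    have hne : {m : ℕ | 2 ^ k ∣ Nat.factorial m}.Nonempty := by
      refine ⟨2 ^ k, ?_⟩
      simp only [Set.mem_setOf_eq]
      rw [dvdA]
      have := Nat.lt_two_pow_self (n := k); omega
    constructor
    · intro h
      have hmem : 2 ^ k ∣ (2 ^ n)! := by
        have := Nat.sInf_mem hne
        rwa [show sInf {m : ℕ | 2 ^ k ∣ Nat.factorial m} = S2 k from rfl, h] at this
      have h1 : k ≤ 2 ^ n - 1 := dvdA.mp hmem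
      have hnot : ¬ (2 ^ k ∣ (2 ^ n - 1)!) := by
        intro hd
        have : S2 k ≤ 2 ^ n - 1 := Nat.sInf_le hd
        omega
      have h2 : ¬ (k ≤ 2 ^ n - 1 - n) := fun hh => hnot (dvdB.mpr hh)
      omega
    · rintro ⟨h1, h2⟩
      have hmem : 2 ^ k ∣ (2 ^ n)! := dvdA.mpr h2
      refine le_antisymm (Nat.sInf_le hmem) ?_
      refine le_csInf ⟨_, hmem⟩ ?_
      intro m hm
      by_contra hlt
      push_neg at hlt
      have hd : 2 ^ k ∣ (2 ^ n - 1)! := hm.trans (Nat.factorial_dvd_factorial (by omega))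
      have := dvdB.mp hd
      omega
  exact ⟨(key _).mpr ⟨le_refl _, by omega⟩, key⟩
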